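/- Degenerate-weight interpolation inequality: There exists C > 0 such that for every C³ function θ on [-1,1], ‖h_s θ''‖_{L^∞(-1,1)} ≤ C ( ‖h_s θ'''‖_{L²(-1,1)} + ‖θ''‖_{L²(-1,1)} ). -/

import Mathlib

noncomputable def hs : ℝ → ℝ := fun x =>
  (Real.exp 1 ^ 2 + 1) / (Real.exp 1 ^ 2 - 1) -
    (Real.exp (x + 1) + Real.exp (1 - x)) / (Real.exp 1 ^ 2 - 1)

noncomputable def hs' : ℝ → ℝ := fun x =>
  (Real.exp (1 - x) - Real.exp (x + 1)) / (Real.exp 1 ^ 2 - 1)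

lemma hs_hasDerivAt (x : ℝ) : HasDerivAt hs (hs' x) x := by
  have h1 : HasDerivAt (fun x : ℝ => Real.exp (x + 1)) (Real.exp (x + 1)) x := by
    simpa using ((hasDerivAt_id x).add_const 1).exp
  have h2 : HasDerivAt (fun x : ℝ => Real.exp (1 - x)) (-Real.exp (1 - x)) x := by
    simpa using ((hasDerivAt_id x).const_sub 1).exp
  have h3 := ((h1.add h2).div_const (Real.exp 1 ^ 2 - 1)).const_sub
      ((Real.exp 1 ^ 2 + 1) / (Real.exp 1 ^ 2 - 1))
  have : hs' x = -((Real.exp (x+1) + -Real.exp (1-x)) / (Real.exp 1 ^ 2 - 1)) := by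
    unfold hs'; ring
  rw [this]
  exact h3

lemma e_bounds : (2:ℝ) < Real.exp 1 ∧ Real.exp 1 < 2.7182818286 :=
  ⟨by have := Real.exp_one_gt_d9; linarith, Real.exp_one_lt_d9⟩

lemma exp_sq_bounds : (4:ℝ) < Real.exp 1 ^ 2 ∧ Real.exp 1 ^ 2 < 9 := by
  obtain ⟨h1, h2⟩ := e_bounds
  constructor <;> nlinarith

lemma exp_mem (t : ℝ) (ht : t ∈ Set.Icc (-1:ℝ) 1) :
    0 < Real.exp (t+1) ∧ Real.exp (t+1) ≤ Real.exp 1 ^ 2 ∧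
    0 < Real.exp (1-t) ∧ Real.exp (1-t) ≤ Real.exp 1 ^ 2 := by
  have e2 : Real.exp 1 ^ 2 = Real.exp 2 := by
    rw [show (2:ℝ) = 1+1 by norm_num, Real.exp_add]; ring
  refine ⟨Real.exp_pos _, ?_, Real.exp_pos _, ?_⟩ <;> rw [e2] <;>
    exact Real.exp_le_exp.2 (by obtain ⟨a,b⟩ := ht; linarith)

lemma hs_bound (t : ℝ) (ht : t ∈ Set.Icc (-1:ℝ) 1) : |hs t| ≤ 28 := by
  obtain ⟨p1, p2, p3, p4⟩ := exp_mem t ht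
  obtain ⟨q1, q2⟩ := exp_sq_bounds
  have hd : (0:ℝ) < Real.exp 1 ^ 2 - 1 := by linarith
  have : hs t = (Real.exp 1 ^ 2 + 1 - (Real.exp (t+1) + Real.exp (1-t))) / (Real.exp 1 ^ 2 - 1) := by
    unfold hs; ring
  rw [this, abs_div, abs_of_pos hd, div_le_iff₀ hd]
  rcases abs_cases (Real.exp 1 ^ 2 + 1 - (Real.exp (t+1) + Real.exp (1-t))) with ⟨h,_⟩|⟨h,_⟩ <;>
    rw [h] <;> nlinarith

lemma hs'_bound (t : ℝ) (ht : t ∈ Set.Icc (-1:ℝ) 1) : |hs' t| ≤ 18 := by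
  obtain ⟨p1, p2, p3, p4⟩ := exp_mem t ht
  obtain ⟨q1, q2⟩ := exp_sq_bounds
  have hd : (0:ℝ) < Real.exp 1 ^ 2 - 1 := by linarith
  unfold hs'
  rw [abs_div, abs_of_pos hd, div_le_iff₀ hd]
  rcases abs_cases (Real.exp (1-t) - Real.exp (t+1)) with ⟨h,_⟩|⟨h,_⟩ <;>
    rw [h] <;> nlinarith

lemma hs_one : hs 1 = 0 := by
  have e2 : Real.exp 1 ^ 2 = Real.exp 2 := by rw [show (2:ℝ) = 1+1 by norm_num, Real.exp_add]; ring
  unfold hs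
  rw [e2]
  norm_num

lemma hs_neg_one : hs (-1) = 0 := by
  have e2 : Real.exp 1 ^ 2 = Real.exp 2 := by rw [show (2:ℝ) = 1+1 by norm_num, Real.exp_add]; ring
  unfold hs
  rw [e2]
  norm_num
  ring

lemma hs_cont : Continuous hs :=
  continuous_iff_continuousAt.2 fun x => (hs_hasDerivAt x).differentiableAt.continuousAt

lemma hs'_cont : Continuous hs' := by
  unfold hs'
  continuity

open Set MeasureTheory

lemma key_ptwise (u v w p : ℝ) (h1 : u^2 ≤ 784*p^2) (h2 : v^2 ≤ 324*p^2) :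
    |2*u*(v+w)| ≤ 1432*p^2 + 2*w^2 := by
  rcases abs_cases (2*u*(v+w)) with ⟨h,_⟩|⟨h,_⟩ <;> rw [h] <;>
    nlinarith [sq_nonneg (u-(v+w)), sq_nonneg (u+(v+w)), sq_nonneg (v-w), sq_nonneg (v+w)]

set_option maxHeartbeats 1000000 in

theorem stmt_10 :
    ∃ C > (0 : ℝ), ∀ θ : ℝ → ℝ, ContDiffOn ℝ 3 θ (Set.Icc (-1 : ℝ) 1) →
      ∀ x ∈ Set.Icc (-1 : ℝ) 1,
        |hs x * deriv (deriv θ) x| ≤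
          C * (Real.sqrt (∫ ξ in (-1 : ℝ)..1, (hs ξ * deriv (deriv (deriv θ)) ξ) ^ 2) +
               Real.sqrt (∫ ξ in (-1 : ℝ)..1, (deriv (deriv θ) ξ) ^ 2)) := by
  refine ⟨48, by norm_num, ?_⟩
  intro θ hθ x hx
  set d2 := deriv (deriv θ) with hd2_def
  set d3 := deriv d2 with hd3_def
  set A := ∫ ξ in (-1:ℝ)..1, (hs ξ * d3 ξ)^2 with hA_def
  set B := ∫ ξ in (-1:ℝ)..1, (d2 ξ)^2 with hB_def
  have hA0 : 0 ≤ A := intervalIntegral.integral_nonneg (by norm_num) (fun u _ => sq_nonneg _)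
  have hB0 : 0 ≤ B := intervalIntegral.integral_nonneg (by norm_num) (fun u _ => sq_nonneg _)
  -- boundary cases
  rcases eq_or_lt_of_le hx.1 with h1 | h1
  · rw [← h1, hs_neg_one, zero_mul, abs_zero]
    positivity
  rcases eq_or_lt_of_le hx.2 with h2 | h2
  · rw [h2, hs_one, zero_mul, abs_zero]
    positivity
  have hxIoo : x ∈ Ioo (-1:ℝ) 1 := ⟨h1, h2⟩
  -- continuous proxies on the closed interval
  have hI : UniqueDiffOn ℝ (Icc (-1:ℝ) 1) := uniqueDiffOn_Icc (by norm_num)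
  set ψ1 := derivWithin θ (Icc (-1:ℝ) 1) with hψ1_def
  set ψ2 := derivWithin ψ1 (Icc (-1:ℝ) 1) with hψ2_def
  set ψ3 := derivWithin ψ2 (Icc (-1:ℝ) 1) with hψ3_def
  have hψ1' : ContDiffOn ℝ 2 ψ1 (Icc (-1:ℝ) 1) := hθ.derivWithin hI (by norm_num)
  have hψ2' : ContDiffOn ℝ 1 ψ2 (Icc (-1:ℝ) 1) := hψ1'.derivWithin hI (by norm_num)
  have hψ2c : ContinuousOn ψ2 (Icc (-1:ℝ) 1) := hψ2'.continuousOn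
  have hψ3c : ContinuousOn ψ3 (Icc (-1:ℝ) 1) := hψ2'.continuousOn_derivWithin hI le_rfl
  -- equality of proxies with honest derivatives on the open interval
  have e1 : ∀ z ∈ Ioo (-1:ℝ) 1, ψ1 z = deriv θ z := fun z hz =>
    derivWithin_of_mem_nhds (Icc_mem_nhds hz.1 hz.2)
  have e2 : ∀ z ∈ Ioo (-1:ℝ) 1, ψ2 z = d2 z := by
    intro z hz
    rw [hψ2_def, derivWithin_of_mem_nhds (Icc_mem_nhds hz.1 hz.2)]
    exact Filter.EventuallyEq.deriv_eq
      (Filter.eventuallyEq_of_mem (isOpen_Ioo.mem_nhds hz) e1)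
  have e3 : ∀ z ∈ Ioo (-1:ℝ) 1, ψ3 z = d3 z := by
    intro z hz
    rw [hψ3_def, derivWithin_of_mem_nhds (Icc_mem_nhds hz.1 hz.2)]
    exact Filter.EventuallyEq.deriv_eq
      (Filter.eventuallyEq_of_mem (isOpen_Ioo.mem_nhds hz) e2)
  -- smoothness on the open interval
  have hθo : ContDiffOn ℝ 3 θ (Ioo (-1:ℝ) 1) := hθ.mono Ioo_subset_Icc_self
  have hD1 : ContDiffOn ℝ 2 (deriv θ) (Ioo (-1:ℝ) 1) :=
    hθo.deriv_of_isOpen isOpen_Ioo (by norm_num)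
  have hD2 : ContDiffOn ℝ 1 d2 (Ioo (-1:ℝ) 1) :=
    hD1.deriv_of_isOpen isOpen_Ioo (by norm_num)
  have hd2c : ContinuousOn d2 (Ioo (-1:ℝ) 1) := hD2.continuousOn
  have hd3c : ContinuousOn d3 (Ioo (-1:ℝ) 1) :=
    hD2.continuousOn_deriv_of_isOpen isOpen_Ioo le_rfl
  have hd2' : ∀ z ∈ Ioo (-1:ℝ) 1, HasDerivAt d2 (d3 z) z := fun z hz =>
    ((hD2.differentiableOn one_ne_zero).differentiableAt (isOpen_Ioo.mem_nhds hz)).hasDerivAt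
  -- rewrite A, B with proxies
  have hne : ∀ᵐ ξ : ℝ, ξ ≠ (1:ℝ) := by
    refine (MeasureTheory.ae_iff).2 ?_
    simp only [not_not, Set.setOf_eq_eq_singleton]
    exact Real.volume_singleton
  have hmem : ∀ᵐ ξ : ℝ, ξ ∈ Set.uIoc (-1:ℝ) 1 → ξ ∈ Ioo (-1:ℝ) 1 := by
    filter_upwards [hne] with ξ hξ hm
    rw [Set.uIoc_of_le (by norm_num : (-1:ℝ) ≤ 1)] at hm
    exact ⟨hm.1, lt_of_le_of_ne hm.2 hξ⟩
  have hAeq : A = ∫ ξ in (-1:ℝ)..1, (hs ξ * ψ3 ξ)^2 := by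
    refine intervalIntegral.integral_congr_ae ?_
    filter_upwards [hmem] with ξ hξ hm
    rw [e3 ξ (hξ hm)]
  have hBeq : B = ∫ ξ in (-1:ℝ)..1, (ψ2 ξ)^2 := by
    refine intervalIntegral.integral_congr_ae ?_
    filter_upwards [hmem] with ξ hξ hm
    rw [e2 ξ (hξ hm)]
  -- interval integrability helper
  have mkInt : ∀ f : ℝ → ℝ, ContinuousOn f (Icc (-1:ℝ) 1) →
      IntervalIntegrable f volume (-1:ℝ) 1 := by
    intro f hf
    apply ContinuousOn.intervalIntegrable
    rwa [Set.uIcc_of_le (by norm_num : (-1:ℝ) ≤ 1)]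
  -- minimum point on [-1/2, 1/2]
  have hsub : Icc (-(1:ℝ)/2) (1/2) ⊆ Icc (-1:ℝ) 1 := Icc_subset_Icc (by norm_num) (by norm_num)
  have hsubo : Icc (-(1:ℝ)/2) (1/2) ⊆ Ioo (-1:ℝ) 1 := fun t ht =>
    ⟨by have := ht.1; linarith, by have := ht.2; linarith⟩
  have hφc : ContinuousOn (fun t => (hs t * ψ2 t)^2) (Icc (-1:ℝ) 1) :=
    (hs_cont.continuousOn.mul hψ2c).pow 2
  obtain ⟨y, hy, hymin⟩ := IsCompact.exists_isMinOn isCompact_Icc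
    (⟨0, by norm_num⟩ : (Icc (-(1:ℝ)/2) (1/2)).Nonempty) (hφc.mono hsub)
  have hyIoo : y ∈ Ioo (-1:ℝ) 1 := hsubo hy
  -- bound the minimum value by the integral
  have hGy : (hs y * ψ2 y)^2 ≤ ∫ ξ in (-1:ℝ)..1, (hs ξ * ψ2 ξ)^2 := by
    have hint1 : IntervalIntegrable (fun ξ => (hs ξ * ψ2 ξ)^2) volume (-(1:ℝ)/2) (1/2) := by
      apply ContinuousOn.intervalIntegrable
      apply (hφc.mono hsub).mono
      rw [Set.uIcc_of_le (by norm_num : (-(1:ℝ)/2) ≤ 1/2)]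
    have i1 := intervalIntegral.integral_mono_on (by norm_num : (-(1:ℝ)/2) ≤ 1/2)
      intervalIntegrable_const hint1 (fun t ht => isMinOn_iff.1 hymin t ht)
    rw [intervalIntegral.integral_const, smul_eq_mul] at i1
    have i2 : (∫ ξ in (-(1:ℝ)/2)..(1/2), (hs ξ * ψ2 ξ)^2) ≤ ∫ ξ in (-1:ℝ)..1, (hs ξ * ψ2 ξ)^2 :=
      intervalIntegral.integral_mono_interval (by norm_num) (by norm_num) (by norm_num)
        (Filter.Eventually.of_forall fun t => sq_nonneg _) (mkInt _ hφc)
    nlinarith [i1, i2]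
  -- FTC for (hs * d2)^2 from y to x
  have hsubI : Set.uIcc y x ⊆ Ioo (-1:ℝ) 1 :=
    Set.OrdConnected.uIcc_subset Set.ordConnected_Ioo hyIoo hxIoo
  have hderiv : ∀ t ∈ Set.uIcc y x, HasDerivAt (fun u => (hs u * d2 u)^2)
      (2*(hs t*d2 t)*(hs' t*d2 t + hs t*d3 t)) t := by
    intro t ht
    have h := ((hs_hasDerivAt t).mul (hd2' t (hsubI ht))).pow 2
    refine h.congr_deriv ?_
    simp only [Pi.mul_apply, Nat.cast_ofNat, Nat.add_one_sub_one, pow_one]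
  have hintF' : IntervalIntegrable (fun t => 2*(hs t*d2 t)*(hs' t*d2 t + hs t*d3 t)) volume y x :=
    ((continuousOn_const.mul ((hs_cont.continuousOn).mul (hd2c.mono hsubI))).mul
      (((hs'_cont.continuousOn).mul (hd2c.mono hsubI)).add
        ((hs_cont.continuousOn).mul (hd3c.mono hsubI)))).intervalIntegrable
  have hFTC := intervalIntegral.integral_eq_sub_of_hasDerivAt hderiv hintF'
  -- replace the integrand by the continuous proxy and bound by S
  set S := ∫ ξ in (-1:ℝ)..1, |2*(hs ξ*ψ2 ξ)*(hs' ξ*ψ2 ξ + hs ξ*ψ3 ξ)| with hS_def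
  have hQc : ContinuousOn (fun t => 2*(hs t*ψ2 t)*(hs' t*ψ2 t + hs t*ψ3 t)) (Icc (-1:ℝ) 1) :=
    (continuousOn_const.mul (hs_cont.continuousOn.mul hψ2c)).mul
      ((hs'_cont.continuousOn.mul hψ2c).add (hs_cont.continuousOn.mul hψ3c))
  have hcongr : Set.EqOn (fun t => 2*(hs t*d2 t)*(hs' t*d2 t + hs t*d3 t))
      (fun t => 2*(hs t*ψ2 t)*(hs' t*ψ2 t + hs t*ψ3 t)) (Set.uIcc y x) := by
    intro t ht
    have h := hsubI ht
    simp only [e2 t h, e3 t h]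
  have hQiyx : IntervalIntegrable (fun t => 2*(hs t*ψ2 t)*(hs' t*ψ2 t + hs t*ψ3 t)) volume y x :=
    (hQc.mono (hsubI.trans Ioo_subset_Icc_self)).intervalIntegrable
  have hQaiyx : IntervalIntegrable (fun t => |2*(hs t*ψ2 t)*(hs' t*ψ2 t + hs t*ψ3 t)|) volume y x :=
    hQiyx.abs
  have habsint : IntervalIntegrable (fun t => |2*(hs t*ψ2 t)*(hs' t*ψ2 t + hs t*ψ3 t)|)
      volume (-1:ℝ) 1 := mkInt _ hQc.abs
  have hIS : (∫ t in y..x, 2*(hs t*d2 t)*(hs' t*d2 t + hs t*d3 t)) ≤ S := by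
    rw [intervalIntegral.integral_congr hcongr]
    rcases le_total y x with hyx | hyx
    · calc (∫ t in y..x, 2*(hs t*ψ2 t)*(hs' t*ψ2 t + hs t*ψ3 t))
          ≤ ∫ t in y..x, |2*(hs t*ψ2 t)*(hs' t*ψ2 t + hs t*ψ3 t)| :=
            intervalIntegral.integral_mono_on hyx hQiyx hQaiyx (fun t _ => le_abs_self _)
        _ ≤ S := intervalIntegral.integral_mono_interval hyIoo.1.le hyx hxIoo.2.le
            (Filter.Eventually.of_forall fun t => abs_nonneg _) habsint
    · have hsymm : (∫ t in y..x, 2*(hs t*ψ2 t)*(hs' t*ψ2 t + hs t*ψ3 t))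
          = -∫ t in x..y, 2*(hs t*ψ2 t)*(hs' t*ψ2 t + hs t*ψ3 t) :=
        (intervalIntegral.integral_symm x y)
      rw [hsymm, ← intervalIntegral.integral_neg]
      calc (∫ t in x..y, -(2*(hs t*ψ2 t)*(hs' t*ψ2 t + hs t*ψ3 t)))
          ≤ ∫ t in x..y, |2*(hs t*ψ2 t)*(hs' t*ψ2 t + hs t*ψ3 t)| :=
            intervalIntegral.integral_mono_on hyx hQiyx.symm.neg hQaiyx.symm
              (fun t _ => neg_le_abs _)
        _ ≤ S := intervalIntegral.integral_mono_interval hxIoo.1.le hyx hyIoo.2.le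
            (Filter.Eventually.of_forall fun t => abs_nonneg _) habsint
  -- pointwise bound on the proxy integrand
  have hpt : ∀ t ∈ Icc (-1:ℝ) 1, |2*(hs t*ψ2 t)*(hs' t*ψ2 t + hs t*ψ3 t)|
      ≤ 1432*(ψ2 t)^2 + 2*(hs t*ψ3 t)^2 := by
    intro t ht
    have ha := hs_bound t ht
    have hb := hs'_bound t ht
    have ha2 : (hs t)^2 ≤ 784 := by nlinarith [abs_nonneg (hs t), sq_abs (hs t)]
    have hb2 : (hs' t)^2 ≤ 324 := by nlinarith [abs_nonneg (hs' t), sq_abs (hs' t)]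
    exact key_ptwise (hs t*ψ2 t) (hs' t*ψ2 t) (hs t*ψ3 t) (ψ2 t)
      (by nlinarith [mul_le_mul_of_nonneg_right ha2 (sq_nonneg (ψ2 t))])
      (by nlinarith [mul_le_mul_of_nonneg_right hb2 (sq_nonneg (ψ2 t))])
  -- bound S
  have hSle : S ≤ 1432*(∫ ξ in (-1:ℝ)..1, (ψ2 ξ)^2) + 2*(∫ ξ in (-1:ℝ)..1, (hs ξ*ψ3 ξ)^2) := by
    have hi1 : IntervalIntegrable (fun ξ => 1432*(ψ2 ξ)^2) volume (-1:ℝ) 1 :=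
      mkInt _ (continuousOn_const.mul (hψ2c.pow 2))
    have hi2 : IntervalIntegrable (fun ξ => 2*(hs ξ*ψ3 ξ)^2) volume (-1:ℝ) 1 :=
      mkInt _ (continuousOn_const.mul ((hs_cont.continuousOn.mul hψ3c).pow 2))
    have hmono := intervalIntegral.integral_mono_on (by norm_num : (-1:ℝ) ≤ 1)
      habsint (hi1.add hi2) hpt
    calc S ≤ ∫ ξ in (-1:ℝ)..1, (1432*(ψ2 ξ)^2 + 2*(hs ξ*ψ3 ξ)^2) := hmono
      _ = 1432*(∫ ξ in (-1:ℝ)..1, (ψ2 ξ)^2) + 2*(∫ ξ in (-1:ℝ)..1, (hs ξ*ψ3 ξ)^2) := by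
          rw [intervalIntegral.integral_add hi1 hi2, intervalIntegral.integral_const_mul,
            intervalIntegral.integral_const_mul]
  -- bound the integral of (hs ψ2)^2 by 784 B
  have hGB : (∫ ξ in (-1:ℝ)..1, (hs ξ * ψ2 ξ)^2) ≤ 784 * ∫ ξ in (-1:ℝ)..1, (ψ2 ξ)^2 := by
    have hi1 : IntervalIntegrable (fun ξ => 784*(ψ2 ξ)^2) volume (-1:ℝ) 1 :=
      mkInt _ (continuousOn_const.mul (hψ2c.pow 2))
    have hmono := intervalIntegral.integral_mono_on (by norm_num : (-1:ℝ) ≤ 1)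
      (mkInt _ hφc) hi1 ?_
    · calc (∫ ξ in (-1:ℝ)..1, (hs ξ * ψ2 ξ)^2) ≤ ∫ ξ in (-1:ℝ)..1, 784*(ψ2 ξ)^2 := hmono
        _ = 784 * ∫ ξ in (-1:ℝ)..1, (ψ2 ξ)^2 := intervalIntegral.integral_const_mul _ _
    · intro t ht
      have ha := hs_bound t ht
      have ha2 : (hs t)^2 ≤ 784 := by nlinarith [abs_nonneg (hs t), sq_abs (hs t)]
      nlinarith [mul_le_mul_of_nonneg_right ha2 (sq_nonneg (ψ2 t))]
  -- assemble
  have hGx : (hs x * d2 x)^2 ≤ 2216*(A+B) := by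
    have hFx : (hs x*d2 x)^2
        = (hs y*d2 y)^2 + ∫ t in y..x, 2*(hs t*d2 t)*(hs' t*d2 t + hs t*d3 t) := by
      rw [hFTC]; ring
    have hyeq : (hs y*d2 y)^2 = (hs y*ψ2 y)^2 := by rw [e2 y hyIoo]
    have hBpr : B = ∫ ξ in (-1:ℝ)..1, (ψ2 ξ)^2 := hBeq
    have hApr : A = ∫ ξ in (-1:ℝ)..1, (hs ξ*ψ3 ξ)^2 := hAeq
    rw [hFx, hyeq]
    have h784 : (hs y*ψ2 y)^2 ≤ 784 * ∫ ξ in (-1:ℝ)..1, (ψ2 ξ)^2 := le_trans hGy hGB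
    rw [hBpr, hApr]
    linarith [hIS, hSle, h784]
  have habs : |hs x * d2 x| = Real.sqrt ((hs x*d2 x)^2) := (Real.sqrt_sq_eq_abs _).symm
  rw [habs]
  calc Real.sqrt ((hs x*d2 x)^2) ≤ Real.sqrt (2216*(A+B)) := Real.sqrt_le_sqrt hGx
    _ = Real.sqrt 2216 * Real.sqrt (A+B) := Real.sqrt_mul (by norm_num) _
    _ ≤ 48 * (Real.sqrt A + Real.sqrt B) := by
        have h1 : Real.sqrt 2216 ≤ 48 := by
          have : (2216:ℝ) ≤ 48^2 := by norm_num
          calc Real.sqrt 2216 ≤ Real.sqrt (48^2) := Real.sqrt_le_sqrt this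
            _ = 48 := Real.sqrt_sq (by norm_num)
        have h2 : Real.sqrt (A+B) ≤ Real.sqrt A + Real.sqrt B := by
          have hA' := Real.sq_sqrt hA0
          have hB' := Real.sq_sqrt hB0
          have hle : A + B ≤ (Real.sqrt A + Real.sqrt B)^2 := by
            nlinarith [Real.sqrt_nonneg A, Real.sqrt_nonneg B]
          calc Real.sqrt (A+B) ≤ Real.sqrt ((Real.sqrt A + Real.sqrt B)^2) :=
              Real.sqrt_le_sqrt hle
            _ = Real.sqrt A + Real.sqrt B := Real.sqrt_sq (by positivity)
        exact mul_le_mul h1 h2 (Real.sqrt_nonneg _) (by norm_num)
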